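/- Let d ≥ 3, m ≥ 1, ω ∈ Ω_{d,m}, and ξ, η ∈ X^ℕ. If there exists an isomorphism of rooted, undirected, unlabeled graphs φ : (Γ_ξ, ξ) → (Γ_η, η), then ξ and η are compatible (ξ ∼ η). -/

import Mathlib

set_option linter.unusedSectionVars false
set_option maxHeartbeats 1000000


open MeasureTheory

noncomputable section

/-- The boundary of the `d`-regular rooted tree: infinite words over `X = {0,…,d-1}`,
identified with `ZMod d`. -/
abbrev Bd (d : ℕ) : Type := ℕ → ZMod d
/-- The rooted automorphism `a`: adds 1 (mod `d`) to the first letter. -/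
def aMap (d : ℕ) (ξ : Bd d) : Bd d := fun n => if n = 0 then ξ 0 + 1 else ξ n

open scoped Classical in
/-- The spinal automorphism `b_ω`: if `ξ` starts with `(d-1)^r 0`, add `ω r b` to the
letter at position `r + 1`; otherwise fix `ξ`. -/
def bMap (d m : ℕ) (ω : ℕ → ((Fin m → ZMod d) →+ ZMod d)) (b : Fin m → ZMod d)
    (ξ : Bd d) : Bd d := fun n =>
  if n ≠ 0 ∧ (∀ i, i < n - 1 → ξ i = (d : ZMod d) - 1) ∧ ξ (n - 1) = 0 then
    ξ n + ω (n - 1) b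
  else ξ n
/-- The spinal generating set `S = {a^j : 1 ≤ j ≤ d-1} ∪ {b_ω : b ∈ B ∖ {0}}`,
as a set of self-maps of the boundary. -/
def genSet (d m : ℕ) (ω : ℕ → ((Fin m → ZMod d) →+ ZMod d)) : Set (Bd d → Bd d) :=
  {f | ∃ j, 1 ≤ j ∧ j ≤ d - 1 ∧ f = (aMap d)^[j]} ∪ {f | ∃ b, b ≠ 0 ∧ f = bMap d m ω b}
/-- Membership in `Ω_{d,m}`: all `ω_n` are surjective and `⋂_{j ≥ i} ker ω_j = {0}`
for every `i ≥ 0`. -/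
def InOmega (d m : ℕ) (ω : ℕ → ((Fin m → ZMod d) →+ ZMod d)) : Prop :=
  (∀ n, Function.Surjective (ω n)) ∧
  ∀ i : ℕ, ∀ b : Fin m → ZMod d, (∀ j, i ≤ j → ω j b = 0) → b = 0
/-- Two boundary points are cofinal if they agree at all sufficiently large positions. -/
def Cofinal {d : ℕ} (ξ η : Bd d) : Prop := ∃ N, ∀ n, N ≤ n → ξ n = η n

/-- The cofinality class of `ξ`. -/
def Cof {d : ℕ} (ξ : Bd d) : Set (Bd d) := {η | Cofinal ξ η}

theorem self_mem_Cof {d : ℕ} (ξ : Bd d) : ξ ∈ Cof ξ := ⟨0, fun _ _ => rfl⟩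
/-- Edge multiplicity in the Schreier graph `Γ_ξ`:
`mult(u, v) = card {s ∈ S : s · u = v}`. -/
def mult (d m : ℕ) (ω : ℕ → ((Fin m → ZMod d) →+ ZMod d)) (u v : Bd d) : ℕ :=
  Nat.card {f : Bd d → Bd d // f ∈ genSet d m ω ∧ f u = v}
/-- `φ` is an isomorphism of rooted, undirected, unlabeled graphs `(Γ_ξ, ξ) → (Γ_η, η)`:
a bijection `Cof(ξ) → Cof(η)` sending `ξ` to `η` and preserving edge multiplicities. -/
def IsRootedIso (d m : ℕ) (ω : ℕ → ((Fin m → ZMod d) →+ ZMod d)) (ξ η : Bd d)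
    (φ : ↥(Cof ξ) ≃ ↥(Cof η)) : Prop :=
  φ ⟨ξ, self_mem_Cof ξ⟩ = ⟨η, self_mem_Cof η⟩ ∧
  ∀ u v : ↥(Cof ξ), mult d m ω ↑u ↑v = mult d m ω ↑(φ u) ↑(φ v)
/-- `ξ` has at least `r` consecutive letters `d-1` immediately before position `p`
(i.e. the block of `ξ` preceding position `p` ends in `(d-1)^r`). -/
def EndsIn (d : ℕ) (ξ : Bd d) (p r : ℕ) : Prop :=
  r ≤ p ∧ ∀ i, p - r ≤ i → i < p → ξ i = (d : ZMod d) - 1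

/-- Compatibility `ξ ∼ η`: zeros at exactly the same positions, and before each zero the
maximal runs of the letter `d-1` have the same length (equivalently, the corresponding
finite blocks end in `(d-1)^r` for exactly the same `r`'s). -/
def Compatible (d : ℕ) (ξ η : Bd d) : Prop :=
  (∀ n, ξ n = 0 ↔ η n = 0) ∧
  ∀ p, ξ p = 0 → ∀ r, (EndsIn d ξ p r ↔ EndsIn d η p r)

namespace SpinalProof

/-- the letter `d-1`. -/
abbrev E (d : ℕ) : ZMod d := (d : ZMod d) - 1

/-- `w` is active at level `r`, i.e. starts with `(d-1)^r 0`. -/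
def IsAct (d : ℕ) (w : Bd d) (r : ℕ) : Prop := (∀ i, i < r → w i = E d) ∧ w r = 0

/-- `w` and `w'` differ exactly at position `p`. -/
def Dif {d : ℕ} (w w' : Bd d) (p : ℕ) : Prop := w p ≠ w' p ∧ ∀ n, n ≠ p → w n = w' n

/-- `w` and `v` differ exactly at position `r+1` where `w` is active at `r`. -/
def DifB (d : ℕ) (w v : Bd d) : Prop := ∃ r, IsAct d w r ∧ Dif w v (r + 1)

section basic

variable {d m : ℕ} (hd : 3 ≤ d)

include hd

lemma E_cast : E d = ((d - 1 : ℕ) : ZMod d) := by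
  push_cast [Nat.cast_sub (by omega : 1 ≤ d)]; ring

lemma cast_inj_lt {a b : ℕ} (ha : a < d) (hb : b < d) (h : (a : ZMod d) = b) : a = b := by
  haveI : NeZero d := ⟨by omega⟩
  have := congrArg ZMod.val h
  rwa [ZMod.val_cast_of_lt ha, ZMod.val_cast_of_lt hb] at this

lemma zero_ne_E : (0 : ZMod d) ≠ E d := by
  rw [E_cast hd]
  intro h
  have h' : ((0:ℕ) : ZMod d) = ((d-1:ℕ) : ZMod d) := by exact_mod_cast h
  have := cast_inj_lt hd (a := 0) (b := d-1) (by omega) (by omega) h'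
  omega

lemma one_ne_E : (1 : ZMod d) ≠ E d := by
  rw [E_cast hd]
  intro h
  have h' : ((1:ℕ) : ZMod d) = ((d-1:ℕ) : ZMod d) := by exact_mod_cast h
  have := cast_inj_lt hd (a := 1) (b := d-1) (by omega) (by omega) h'
  omega

lemma one_ne_zero' : (1 : ZMod d) ≠ 0 := by
  intro h
  have h' : ((1:ℕ) : ZMod d) = ((0:ℕ) : ZMod d) := by exact_mod_cast h
  have := cast_inj_lt hd (a := 1) (b := 0) (by omega) (by omega) h'
  omega

lemma act_unique {w : Bd d} {r r' : ℕ} (h : IsAct d w r) (h' : IsAct d w r') : r = r' := by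
  by_contra hne
  rcases Nat.lt_or_ge r r' with hlt | hge
  · exact zero_ne_E hd (h.2 ▸ (h'.1 r hlt) ▸ rfl)
  · have hlt : r' < r := by omega
    exact zero_ne_E hd (h'.2 ▸ (h.1 r' hlt) ▸ rfl)

lemma aIter (j : ℕ) (w : Bd d) :
    (aMap d)^[j] w = fun n => if n = 0 then w 0 + (j : ZMod d) else w n := by
  induction j with
  | zero => funext n; by_cases h : n = 0 <;> simp [h]
  | succ j ih =>
    rw [Function.iterate_succ_apply', ih]
    funext n
    by_cases h : n = 0 <;> simp [aMap, h] <;> push_cast <;> ring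

end basic

section bmap

variable {d m : ℕ} {ω : ℕ → ((Fin m → ZMod d) →+ ZMod d)} (hd : 3 ≤ d)

include hd

lemma bMap_act {u : Bd d} {r : ℕ} (hr : IsAct d u r) (b : Fin m → ZMod d) :
    bMap d m ω b u = fun n => if n = r + 1 then u n + ω r b else u n := by
  funext n
  rw [bMap]
  by_cases h : n = r + 1
  · subst h
    have hc : (r+1 ≠ 0 ∧ (∀ i, i < r+1-1 → u i = (d:ZMod d) - 1) ∧ u (r+1-1) = 0) := by
      refine ⟨by omega, ?_, ?_⟩
      · simpa [E] using hr.1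
      · simpa [E] using hr.2
    rw [if_pos hc, if_pos rfl]
    norm_num
  · rw [if_neg, if_neg h]
    rintro ⟨h0, h1, h2⟩
    have : IsAct d u (n - 1) := ⟨h1, h2⟩
    have := act_unique hd this hr
    omega

lemma bMap_inact {u : Bd d} (h : ∀ r, ¬ IsAct d u r) (b : Fin m → ZMod d) :
    bMap d m ω b u = u := by
  funext n
  rw [bMap, if_neg]
  rintro ⟨h0, h1, h2⟩
  exact h (n - 1) ⟨h1, h2⟩

end bmap

section count

variable {d m : ℕ} (hd : 3 ≤ d) (hm : 1 ≤ m)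

lemma card_B (hd : 3 ≤ d) : Nat.card (Fin m → ZMod d) = d ^ m := by
  haveI : NeZero d := ⟨by omega⟩
  rw [Nat.card_pi]
  simp [Nat.card_zmod]

lemma card_ne {α : Type*} [Finite α] (a : α) : Nat.card {x : α // x ≠ a} = Nat.card α - 1 := by
  classical
  cases nonempty_fintype α
  rw [Nat.card_eq_fintype_card, Nat.card_eq_fintype_card]
  have : Fintype.card {x : α // ¬ (x = a)} = Fintype.card α - Fintype.card {x : α // x = a} :=
    Fintype.card_subtype_compl _
  rw [Fintype.card_subtype_eq] at this
  exact this

variable (g : (Fin m → ZMod d) →+ ZMod d) (hg : Function.Surjective g)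

include hd hm hg in
lemma card_ker : Nat.card g.ker = d ^ (m - 1) := by
  haveI : NeZero d := ⟨by omega⟩
  have h1 : Nat.card ((Fin m → ZMod d) ⧸ g.ker) = d := by
    rw [Nat.card_congr (QuotientAddGroup.quotientKerEquivOfSurjective g hg).toEquiv]
    exact Nat.card_zmod d
  have h2 := AddSubgroup.card_eq_card_quotient_mul_card_addSubgroup g.ker
  rw [card_B hd, h1] at h2
  have h3 : d ^ m = d * d ^ (m - 1) := by
    conv_lhs => rw [show m = (m-1) + 1 by omega]
    ring
  rw [h3] at h2
  exact (Nat.eq_of_mul_eq_mul_left (by omega) h2.symm)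

include hd hm hg in
lemma card_fiber (δ : ZMod d) : Nat.card {b : Fin m → ZMod d // g b = δ} = d ^ (m - 1) := by
  obtain ⟨b₀, hb₀⟩ := hg δ
  have e : g.ker ≃ {b : Fin m → ZMod d // g b = δ} :=
    { toFun := fun k => ⟨k.1 + b₀, by
        have hk : g k.1 = 0 := AddMonoidHom.mem_ker.mp k.2
        simp [hk, hb₀]⟩
      invFun := fun b => ⟨b.1 - b₀, AddMonoidHom.mem_ker.mpr (by simp [b.2, hb₀])⟩
      left_inv := fun k => Subtype.ext (by simp)
      right_inv := fun b => Subtype.ext (by simp) }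
  rw [← Nat.card_congr e]
  exact card_ker hd hm g hg

include hd hm hg in
lemma card_fiber_ne {δ : ZMod d} (hδ : δ ≠ 0) :
    Nat.card {b : Fin m → ZMod d // b ≠ 0 ∧ g b = δ} = d ^ (m - 1) := by
  have e : {b : Fin m → ZMod d // b ≠ 0 ∧ g b = δ} ≃ {b : Fin m → ZMod d // g b = δ} :=
    Equiv.subtypeEquivRight (fun b => by
      constructor
      · exact fun h => h.2
      · intro h
        refine ⟨?_, h⟩
        rintro rfl
        rw [map_zero] at h
        exact hδ h.symm)
  rw [Nat.card_congr e]
  exact card_fiber hd hm g hg δ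

include hd hm hg in
lemma card_fiber_zero :
    Nat.card {b : Fin m → ZMod d // b ≠ 0 ∧ g b = 0} = d ^ (m - 1) - 1 := by
  haveI : NeZero d := ⟨by omega⟩
  have e : {b : Fin m → ZMod d // b ≠ 0 ∧ g b = 0} ≃ {k : g.ker // k ≠ 0} :=
    { toFun := fun b => ⟨⟨b.1, AddMonoidHom.mem_ker.mpr b.2.2⟩,
        fun h => b.2.1 (congrArg Subtype.val h)⟩
      invFun := fun k => ⟨k.1.1, ⟨fun h => k.2 (Subtype.ext h), AddMonoidHom.mem_ker.mp k.1.2⟩⟩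
      left_inv := fun b => rfl
      right_inv := fun k => rfl }
  rw [Nat.card_congr e, card_ne, card_ker hd hm g hg]

include hd in
lemma card_Bne : Nat.card {b : Fin m → ZMod d // b ≠ 0} = d ^ m - 1 := by
  haveI : NeZero d := ⟨by omega⟩
  rw [card_ne, card_B hd]

end count


section mult

variable {d m : ℕ} {ω : ℕ → ((Fin m → ZMod d) →+ ZMod d)}
variable (hd : 3 ≤ d) (hm : 1 ≤ m) (hω : InOmega d m ω)

/-- the `a`-type generators sending `u` to `v`. -/
def SaT (d : ℕ) (u v : Bd d) : Type :=
  {j : ℕ // (1 ≤ j ∧ j ≤ d - 1) ∧ (aMap d)^[j] u = v}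

/-- the `b`-type generators sending `u` to `v`. -/
def SbT (d m : ℕ) (ω : ℕ → ((Fin m → ZMod d) →+ ZMod d)) (u v : Bd d) : Type :=
  {b : Fin m → ZMod d // b ≠ 0 ∧ bMap d m ω b u = v}

include hd in
lemma finite_SaT (u v : Bd d) : Finite (SaT d u v) := by
  apply Finite.of_injective (fun j => (⟨j.1, by have := j.2.1; omega⟩ : Fin d))
  intro a b h
  exact Subtype.ext (by simpa using congrArg Fin.val h)

include hd in
lemma finite_SbT (u v : Bd d) : Finite (SbT d m ω u v) := by
  haveI : NeZero d := ⟨by omega⟩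
  exact Subtype.finite

include hd in
lemma const_one_inact : ∀ r, ¬ IsAct d (fun _ => (1 : ZMod d)) r :=
  fun _ h => one_ne_zero' hd h.2

include hd hω in
lemma mult_eq (u v : Bd d) :
    mult d m ω u v = Nat.card (SaT d u v) + Nat.card (SbT d m ω u v) := by
  haveI : NeZero d := ⟨by omega⟩
  haveI := finite_SaT hd u v
  haveI := finite_SbT hd (ω := ω) u v
  rw [mult, ← Nat.card_sum]
  apply Nat.card_congr
  apply Equiv.symm
  refine Equiv.ofBijective (fun x => match x with
    | Sum.inl j => ⟨(aMap d)^[j.1], Or.inl ⟨j.1, j.2.1.1, j.2.1.2, rfl⟩, j.2.2⟩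
    | Sum.inr b => ⟨bMap d m ω b.1, Or.inr ⟨b.1, b.2.1, rfl⟩, b.2.2⟩) ⟨?_, ?_⟩
  · rintro (j | b) (j' | b') h
    · have h' : (aMap d)^[j.1] = (aMap d)^[j'.1] := congrArg Subtype.val h
      have hj := congrFun (congrFun h' (fun _ => (0 : ZMod d))) 0
      rw [aIter hd, aIter hd] at hj
      simp at hj
      have := cast_inj_lt hd (a := j.1) (b := j'.1)
        (by have := j.2.1; omega) (by have := j'.2.1; omega) hj
      exact congrArg Sum.inl (Subtype.ext this)
    · exfalso
      have h' : (aMap d)^[j.1] = bMap d m ω b'.1 := congrArg Subtype.val h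
      have h0 := congrFun (congrFun h' (fun _ => (1 : ZMod d))) 0
      rw [aIter hd, bMap_inact hd (const_one_inact hd)] at h0
      simp at h0
      have := cast_inj_lt hd (a := j.1) (b := 0) (by have := j.2.1; omega) (by omega)
        (by first | exact_mod_cast h0 | exact_mod_cast h0.symm)
      have := j.2.1
      omega
    · exfalso
      have h' : bMap d m ω b.1 = (aMap d)^[j'.1] := congrArg Subtype.val h
      have h0 := congrFun (congrFun h' (fun _ => (1 : ZMod d))) 0
      rw [aIter hd, bMap_inact hd (const_one_inact hd)] at h0
      simp at h0
      have := cast_inj_lt hd (a := j'.1) (b := 0) (by have := j'.2.1; omega) (by omega)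
        (by first | exact_mod_cast h0 | exact_mod_cast h0.symm)
      have := j'.2.1
      omega
    · have h' : bMap d m ω b.1 = bMap d m ω b'.1 := congrArg Subtype.val h
      have key : ∀ r, ω r b.1 = ω r b'.1 := by
        intro r
        set ur : Bd d := fun i => if i < r then E d else 0 with hur
        have hact : IsAct d ur r := by
          constructor
          · intro i hi; simp [hur, hi]
          · simp [hur]
        have := congrFun (congrFun h' ur) (r + 1)
        rw [bMap_act hd hact, bMap_act hd hact] at this
        simpa using this
      have : b.1 - b'.1 = 0 := by
        apply hω.2 0
        intro j _
        rw [map_sub, key j, sub_self]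
      have : b.1 = b'.1 := by
        have := sub_eq_zero.mp this
        exact this
      exact congrArg Sum.inr (Subtype.ext this)
  · rintro ⟨f, hf, hfu⟩
    rcases hf with ⟨j, h1, h2, rfl⟩ | ⟨b, hb, rfl⟩
    · exact ⟨Sum.inl ⟨j, ⟨h1, h2⟩, hfu⟩, rfl⟩
    · exact ⟨Sum.inr ⟨b, hb, hfu⟩, rfl⟩

include hd in
lemma cardSa_dif0 {u v : Bd d} (h : Dif u v 0) : Nat.card (SaT d u v) = 1 := by
  haveI : NeZero d := ⟨by omega⟩
  rw [Nat.card_eq_one_iff_unique]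
  have hfun : ∀ j : ℕ, ((aMap d)^[j] u = v) ↔ ((j : ZMod d) = v 0 - u 0) := by
    intro j
    rw [aIter hd, funext_iff]
    constructor
    · intro hh
      have := hh 0
      simp at this
      rw [← this]; ring
    · intro hh n
      by_cases hn : n = 0
      · subst hn; rw [hh]; simp
      · simp [hn, h.2 n hn]
  constructor
  · constructor
    rintro ⟨j, hj1, hj2⟩ ⟨j', hj1', hj2'⟩
    apply Subtype.ext
    simp only at *
    rw [hfun] at hj2 hj2'
    exact cast_inj_lt hd (by omega) (by omega) (hj2.trans hj2'.symm)
  · refine ⟨⟨(v 0 - u 0).val, ⟨?_, ?_⟩, ?_⟩⟩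
    · have : v 0 - u 0 ≠ 0 := fun hc => h.1 (by
        have := sub_eq_zero.mp hc; exact this.symm ▸ rfl)
      have : (v 0 - u 0).val ≠ 0 := fun hc => this ((ZMod.val_eq_zero _).mp hc)
      omega
    · have := ZMod.val_lt (v 0 - u 0); omega
    · rw [hfun]
      exact ZMod.natCast_rightInverse _

include hd in
lemma cardSa_zero {u v : Bd d} (h : ¬ Dif u v 0) : Nat.card (SaT d u v) = 0 := by
  rw [Nat.card_eq_zero]
  left
  constructor
  rintro ⟨j, ⟨hj1, hj2⟩, hj3⟩
  apply h
  rw [aIter hd, funext_iff] at hj3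
  constructor
  · intro hc
    have h0 := hj3 0
    simp at h0
    have : (j : ZMod d) = 0 := by rw [hc] at h0; simpa using h0.symm
    have := cast_inj_lt hd (a := j) (b := 0) (by omega) (by omega) (by exact_mod_cast this)
    omega
  · intro n hn
    have := hj3 n
    simpa [hn] using this

include hd in
lemma cardSb_inact_self {u : Bd d} (h : ∀ r, ¬ IsAct d u r) :
    Nat.card (SbT d m ω u u) = d ^ m - 1 := by
  have e : SbT d m ω u u ≃ {b : Fin m → ZMod d // b ≠ 0} :=
    Equiv.subtypeEquivRight (fun b => by
      simp only [and_iff_left_iff_imp]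
      intro _
      exact bMap_inact hd h b)
  rw [Nat.card_congr e]
  exact card_Bne hd

include hd in
lemma cardSb_inact_ne {u v : Bd d} (h : ∀ r, ¬ IsAct d u r) (hne : u ≠ v) :
    Nat.card (SbT d m ω u v) = 0 := by
  rw [Nat.card_eq_zero]
  left
  constructor
  rintro ⟨b, hb, hbv⟩
  rw [bMap_inact hd h] at hbv
  exact hne hbv

include hd in
lemma bMap_eq_iff {u v : Bd d} {r : ℕ} (hr : IsAct d u r) (b : Fin m → ZMod d) :
    bMap d m ω b u = v ↔ ((∀ n, n ≠ r + 1 → u n = v n) ∧ u (r+1) + ω r b = v (r+1)) := by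
  rw [bMap_act hd hr, funext_iff]
  constructor
  · intro hh
    constructor
    · intro n hn
      have := hh n
      simpa [hn] using this
    · have := hh (r+1)
      simpa using this
  · intro ⟨h1, h2⟩ n
    by_cases hn : n = r + 1
    · subst hn; simpa using h2
    · simpa [hn] using h1 n hn

include hd hm hω in
lemma cardSb_act_self {u : Bd d} {r : ℕ} (hr : IsAct d u r) :
    Nat.card (SbT d m ω u u) = d ^ (m-1) - 1 := by
  have e : SbT d m ω u u ≃ {b : Fin m → ZMod d // b ≠ 0 ∧ ω r b = 0} :=
    Equiv.subtypeEquivRight (fun b => by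
      rw [bMap_eq_iff hd hr]
      constructor
      · rintro ⟨hb, _, h2⟩
        refine ⟨hb, ?_⟩
        have : u (r+1) + ω r b = u (r+1) + 0 := by simpa using h2
        exact add_left_cancel this
      · rintro ⟨hb, h2⟩
        exact ⟨hb, fun n _ => rfl, by simp [h2]⟩)
  rw [Nat.card_congr e]
  exact card_fiber_zero hd hm (ω r) (hω.1 r)

include hd hm hω in
lemma cardSb_act_dif {u v : Bd d} {r : ℕ} (hr : IsAct d u r) (h : Dif u v (r+1)) :
    Nat.card (SbT d m ω u v) = d ^ (m-1) := by
  have e : SbT d m ω u v ≃ {b : Fin m → ZMod d // b ≠ 0 ∧ ω r b = v (r+1) - u (r+1)} :=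
    Equiv.subtypeEquivRight (fun b => by
      rw [bMap_eq_iff hd hr]
      constructor
      · rintro ⟨hb, _, h2⟩
        exact ⟨hb, by rw [← h2]; ring⟩
      · rintro ⟨hb, h2⟩
        exact ⟨hb, fun n hn => h.2 n hn, by rw [h2]; ring⟩)
  rw [Nat.card_congr e]
  exact card_fiber_ne hd hm (ω r) (hω.1 r) (fun hc => h.1 (by
    have := sub_eq_zero.mp hc
    exact this.symm ▸ rfl))

include hd hω in
lemma cardSb_act_far {u v : Bd d} {r : ℕ} (hr : IsAct d u r)
    (h : ¬ ∀ n, n ≠ r + 1 → u n = v n) : Nat.card (SbT d m ω u v) = 0 := by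
  rw [Nat.card_eq_zero]
  left
  constructor
  rintro ⟨b, hb, hbv⟩
  rw [bMap_eq_iff hd hr] at hbv
  exact h hbv.1

include hd hm hω in
lemma mult_self_inact {u : Bd d} (h : ∀ r, ¬ IsAct d u r) :
    mult d m ω u u = d ^ m - 1 := by
  rw [mult_eq hd hω, cardSa_zero hd (fun hc => hc.1 rfl), cardSb_inact_self hd h]
  omega

include hd hm hω in
lemma mult_self_act {u : Bd d} {r : ℕ} (hr : IsAct d u r) :
    mult d m ω u u = d ^ (m-1) - 1 := by
  rw [mult_eq hd hω, cardSa_zero hd (fun hc => hc.1 rfl), cardSb_act_self hd hm hω hr]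
  omega

include hd hm hω in
lemma mult_dif0 {u v : Bd d} (h : Dif u v 0) : mult d m ω u v = 1 := by
  rw [mult_eq hd hω, cardSa_dif0 hd h]
  rcases Classical.em (∃ r, IsAct d u r) with ⟨r, hr⟩ | hin
  · rw [cardSb_act_far hd hω hr (fun hc => h.1 (hc 0 (by omega)))]
  · push_neg at hin
    rw [cardSb_inact_ne hd hin (fun hc => h.1 (hc ▸ rfl))]

include hd hm hω in
lemma mult_difb {u v : Bd d} {r : ℕ} (hr : IsAct d u r) (h : Dif u v (r+1)) :
    mult d m ω u v = d ^ (m-1) := by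
  have h0 : ¬ Dif u v 0 := fun hc => h.1 (hc.2 (r+1) (by omega)) 
  rw [mult_eq hd hω, cardSa_zero hd h0, cardSb_act_dif hd hm hω hr h]
  omega

include hd hm hω in
lemma mult_other {u v : Bd d} (hne : u ≠ v) (h0 : ¬ Dif u v 0) (hb : ¬ DifB d u v) :
    mult d m ω u v = 0 := by
  rw [mult_eq hd hω, cardSa_zero hd h0]
  rcases Classical.em (∃ r, IsAct d u r) with ⟨r, hr⟩ | hin
  · rcases Classical.em (∀ n, n ≠ r + 1 → u n = v n) with hfar | hfar
    · exfalso
      apply hb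
      refine ⟨r, hr, ?_, hfar⟩
      intro hc
      apply hne
      funext n
      by_cases hn : n = r + 1
      · subst hn; exact hc
      · exact hfar n hn
    · rw [cardSb_act_far hd hω hr hfar]
  · push_neg at hin
    rw [cardSb_inact_ne hd hin hne]

end mult


section graph
variable {V : Type*} (M : V → V → ℕ) (d m : ℕ)

def gAct (u : V) : Prop := M u u ≠ d ^ m - 1

def gAdj (u v : V) : Prop := u ≠ v ∧ M u v ≠ 0

def gB (u v : V) : Prop := gAdj M u v ∧ ∃ f : Fin d → V, Function.Injective f ∧
  (∀ i j, i ≠ j → gAdj M (f i) (f j)) ∧ (∀ i, gAct M d m (f i)) ∧ (∃ i, f i = u) ∧ (∃ i, f i = v)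

def gA (u v : V) : Prop := gAdj M u v ∧ ¬ gB M d m u v

def gBC (u : V) : Set V := insert u {v | gB M d m u v}

def gCl (u : V) (C : Set V) : Prop :=
  C.Finite ∧ C.Nonempty ∧ (∀ x ∈ C, x ∉ gBC M d m u) ∧
  ∀ x ∈ C, ∀ y : V, gAdj M x y → y ∈ C ∨ y ∈ gBC M d m u

def gSep (j : ℕ) (u : V) : Prop :=
  gAct M d m u ∧ (∃ C, gCl M d m u C ∧ C.ncard ≤ d ^ (j+1) - 1) ∧
    ∀ C, gCl M d m u C → d ^ (j+1) - 1 ≤ C.ncard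

def gS (q : ℕ) (x y : V) : Prop :=
  gA M d m x y ∨ (gB M d m x y ∧ ∃ j, j + 1 ≤ q ∧ gSep M d m j x)

def gAgr : ℕ → V → V → Prop
  | 0 => Eq
  | (q+1) => Relation.ReflTransGen (gS M d m q)

def gPhi (root : V) (p r : ℕ) : Prop :=
  r ≤ p ∧ ∃ u : V, gAgr M d m (p - r) root u ∧ gSep M d m p u

end graph

section transport

variable {V W : Type*} {M : V → V → ℕ} {N : W → W → ℕ} {d m : ℕ}
variable (e : V ≃ W) (hM : ∀ u v : V, N (e u) (e v) = M u v)

include hM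

lemma hMsymm : ∀ x y : W, M (e.symm x) (e.symm y) = N x y := by
  intro x y
  rw [← hM]
  simp

lemma tAct (u : V) : gAct N d m (e u) ↔ gAct M d m u := by
  unfold gAct; rw [hM]

lemma tAdj (u v : V) : gAdj N (e u) (e v) ↔ gAdj M u v := by
  unfold gAdj; rw [hM, e.injective.ne_iff]

lemma tB (u v : V) : gB N d m (e u) (e v) ↔ gB M d m u v := by
  constructor
  · rintro ⟨hadj, f, hinj, hpadj, hact, ⟨i, hi⟩, ⟨i', hi'⟩⟩
    refine ⟨(tAdj e hM u v).mp hadj, e.symm ∘ f, e.symm.injective.comp hinj, ?_, ?_, ?_, ?_⟩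
    · intro a b hab
      have := hpadj a b hab
      rw [← e.apply_symm_apply (f a), ← e.apply_symm_apply (f b)] at this
      exact (tAdj e hM _ _).mp this
    · intro i
      have := hact i
      rw [← e.apply_symm_apply (f i)] at this
      exact (tAct e hM _).mp this
    · exact ⟨i, by rw [Function.comp_apply, hi]; simp⟩
    · exact ⟨i', by rw [Function.comp_apply, hi']; simp⟩
  · rintro ⟨hadj, f, hinj, hpadj, hact, ⟨i, hi⟩, ⟨i', hi'⟩⟩
    refine ⟨(tAdj e hM u v).mpr hadj, e ∘ f, e.injective.comp hinj, ?_, ?_, ?_, ?_⟩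
    · intro a b hab
      exact (tAdj e hM _ _).mpr (hpadj a b hab)
    · intro i
      exact (tAct e hM _).mpr (hact i)
    · exact ⟨i, by rw [Function.comp_apply, hi]⟩
    · exact ⟨i', by rw [Function.comp_apply, hi']⟩

lemma tBC (u : V) : gBC N d m (e u) = e '' gBC M d m u := by
  ext w
  obtain ⟨x, rfl⟩ := e.surjective w
  rw [e.injective.mem_set_image]
  simp only [gBC, Set.mem_insert_iff, Set.mem_setOf_eq]
  rw [e.injective.eq_iff, tB e hM]

lemma tCl_mp (u : V) (C : Set V) (h : gCl M d m u C) : gCl N d m (e u) (e '' C) := by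
  obtain ⟨hfin, hne, hdisj, hclo⟩ := h
  refine ⟨hfin.image e, hne.image e, ?_, ?_⟩
  · rintro w ⟨x, hx, rfl⟩ hmem
    rw [tBC e hM, e.injective.mem_set_image] at hmem
    exact hdisj x hx hmem
  · rintro w ⟨x, hx, rfl⟩ y hxy
    obtain ⟨y', rfl⟩ := e.surjective y
    have := hclo x hx y' ((tAdj e hM x y').mp hxy)
    rcases this with h | h
    · exact Or.inl ⟨y', h, rfl⟩
    · right
      rw [tBC e hM, e.injective.mem_set_image]
      exact h

lemma tCl (u : V) (C : Set V) : gCl N d m (e u) (e '' C) ↔ gCl M d m u C := by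
  refine ⟨fun h => ?_, tCl_mp e hM u C⟩
  have := tCl_mp e.symm (hMsymm e hM) (e u) (e '' C) h
  simpa [Equiv.symm_image_image] using this

lemma tSep_mp (j : ℕ) (u : V) (h : gSep M d m j u) : gSep N d m j (e u) := by
  obtain ⟨ha, ⟨C, hC, hle⟩, hall⟩ := h
  refine ⟨(tAct e hM u).mpr ha, ⟨e '' C, tCl_mp e hM u C hC, ?_⟩, ?_⟩
  · rwa [Set.ncard_image_of_injective C e.injective]
  · intro C' hC'
    have h1 : gCl M d m u (e.symm '' C') := by
      have := tCl_mp e.symm (hMsymm e hM) (e u) C' hC'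
      simpa using this
    have := hall _ h1
    rwa [Set.ncard_image_of_injective C' e.symm.injective] at this

lemma tSep (j : ℕ) (u : V) : gSep N d m j (e u) ↔ gSep M d m j u := by
  refine ⟨fun h => ?_, tSep_mp e hM j u⟩
  have := tSep_mp e.symm (hMsymm e hM) j (e u) h
  simpa using this

lemma tS_mp (q : ℕ) (x y : V) (h : gS M d m q x y) : gS N d m q (e x) (e y) := by
  rcases h with ⟨hadj, hnb⟩ | ⟨hb, j, hj, hsep⟩
  · exact Or.inl ⟨(tAdj e hM x y).mpr hadj, fun hc => hnb ((tB e hM x y).mp hc)⟩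
  · exact Or.inr ⟨(tB e hM x y).mpr hb, j, hj, (tSep e hM j x).mpr hsep⟩

lemma tAgr_mp (q : ℕ) (x y : V) (h : gAgr M d m q x y) : gAgr N d m q (e x) (e y) := by
  cases q with
  | zero => exact congrArg e h
  | succ q => exact Relation.ReflTransGen.lift e (fun a b hab => tS_mp e hM q a b hab) _ _ h

lemma tPhi (root : V) (p r : ℕ) : gPhi N d m (e root) p r ↔ gPhi M d m root p r := by
  constructor
  · rintro ⟨hrp, u, hagr, hsep⟩
    refine ⟨hrp, e.symm u, ?_, ?_⟩
    · have := tAgr_mp e.symm (hMsymm e hM) (p - r) (e root) u hagr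
      simpa using this
    · exact tSep_mp e.symm (hMsymm e hM) p u hsep
  · rintro ⟨hrp, u, hagr, hsep⟩
    exact ⟨hrp, e u, tAgr_mp e hM (p - r) root u hagr, tSep_mp e hM p u hsep⟩

end transport


section concrete

variable {d m : ℕ} {ω : ℕ → ((Fin m → ZMod d) →+ ZMod d)} {ξ : Bd d}

/-- the multiplicity function on the cofinality class of `ξ`. -/
def MM (d m : ℕ) (ω : ℕ → ((Fin m → ZMod d) →+ ZMod d)) (ξ : Bd d) :
    ↥(Cof ξ) → ↥(Cof ξ) → ℕ := fun u v => mult d m ω u.1 v.1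

lemma mem_cof_mod (u : ↥(Cof ξ)) (w : Bd d) (N : ℕ) (h : ∀ n, N ≤ n → w n = u.1 n) :
    w ∈ Cof ξ := by
  obtain ⟨N₀, h₀⟩ := u.2
  exact ⟨max N₀ N, fun n hn => by
    rw [h n (le_trans (le_max_right _ _) hn)]
    exact h₀ n (le_trans (le_max_left _ _) hn)⟩

variable (hd : 3 ≤ d) (hm : 1 ≤ m) (hω : InOmega d m ω)

include hd hm hω

lemma cAct (u : ↥(Cof ξ)) : gAct (MM d m ω ξ) d m u ↔ ∃ r, IsAct d u.1 r := by
  constructor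
  · intro h
    by_contra hc
    push_neg at hc
    exact h (mult_self_inact hd hm hω hc)
  · rintro ⟨r, hr⟩
    have h1 : d ^ (m-1) < d ^ m := Nat.pow_lt_pow_right (by omega) (by omega)
    have h2 : 1 ≤ d ^ (m-1) := Nat.one_le_pow _ _ (by omega)
    intro hc
    rw [show MM d m ω ξ u u = mult d m ω u.1 u.1 from rfl, mult_self_act hd hm hω hr] at hc
    omega

lemma cAdj (u v : ↥(Cof ξ)) :
    gAdj (MM d m ω ξ) u v ↔ (Dif u.1 v.1 0 ∨ DifB d u.1 v.1) := by
  constructor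
  · rintro ⟨hne, hM⟩
    by_contra hc
    push_neg at hc
    apply hM
    exact mult_other hd hm hω (fun h => hne (Subtype.ext h)) hc.1 hc.2
  · rintro (h | ⟨r, hr, hdif⟩)
    · refine ⟨fun hc => h.1 (by rw [hc]), ?_⟩
      rw [show MM d m ω ξ u v = mult d m ω u.1 v.1 from rfl, mult_dif0 hd hm hω h]
      omega
    · refine ⟨fun hc => hdif.1 (by rw [hc]), ?_⟩
      rw [show MM d m ω ξ u v = mult d m ω u.1 v.1 from rfl, mult_difb hd hm hω hr hdif]
      have h2 : 1 ≤ d ^ (m-1) := Nat.one_le_pow _ _ (by omega)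
      omega

omit hd hm hω in
lemma dif_symm {w w' : Bd d} {p : ℕ} (h : Dif w w' p) : Dif w' w p :=
  ⟨fun hc => h.1 hc.symm, fun n hn => (h.2 n hn).symm⟩

omit hd hm hω in
lemma dif_unique {w w' : Bd d} {p q : ℕ} (h : Dif w w' p) (h' : Dif w w' q) : p = q := by
  by_contra hc
  exact h.1 (h'.2 p hc)

omit hm hω in
lemma difb_act_partner {w v : Bd d} (h : DifB d w v) : DifB d v w := by
  obtain ⟨r, hr, hdif⟩ := h
  refine ⟨r, ⟨fun i hi => ?_, ?_⟩, dif_symm hdif⟩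
  · rw [← hdif.2 i (by omega)]
    exact hr.1 i hi
  · rw [← hdif.2 r (by omega)]
    exact hr.2

omit hd hm hω in
lemma dif_tri {x y z : Bd d} {p q s : ℕ} (hxy : Dif x y p) (hxz : Dif x z q)
    (hyz : Dif y z s) : q = s := by
  by_contra hqs
  have h1 : x q ≠ y q := by
    intro hc
    apply hxz.1
    rw [hc, hyz.2 q hqs]
  have hp1 : p = q := by
    by_contra hc
    exact h1 (hxy.2 q (fun hh => hc hh.symm))
  have h2 : x s ≠ y s := by
    intro hc
    apply hyz.1
    rw [← hc, hxz.2 s (fun hh => hqs hh.symm)]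
  have hp2 : p = s := by
    by_contra hc
    exact h2 (hxy.2 s (fun hh => hc hh.symm))
  exact hqs (hp1 ▸ hp2)

omit hm hω in
lemma dif_all {f : Fin d → Bd d}
    (pos : ∀ i j : Fin d, i ≠ j → ∃ p, Dif (f i) (f j) p)
    {i₀ i₁ : Fin d} (h01 : i₀ ≠ i₁) {p : ℕ} (hp : Dif (f i₀) (f i₁) p) :
    ∀ k l : Fin d, k ≠ l → Dif (f k) (f l) p := by
  have key : ∀ k : Fin d, k ≠ i₀ → k ≠ i₁ → Dif (f i₀) (f k) p ∧ Dif (f i₁) (f k) p := by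
    intro k hk0 hk1
    obtain ⟨q, hq⟩ := pos i₀ k (fun hh => hk0 hh.symm)
    obtain ⟨t, ht⟩ := pos i₁ k (fun hh => hk1 hh.symm)
    have hqt : q = t := dif_tri hp hq ht
    have htp : t = p := dif_tri (dif_symm hq) (dif_symm ht) hp
    exact ⟨(hqt.trans htp) ▸ hq, htp ▸ ht⟩
  intro k l hkl
  by_cases hk0 : k = i₀
  · subst hk0
    by_cases hl1 : l = i₁
    · subst hl1; exact hp
    · exact (key l (fun hh => hkl hh.symm) hl1).1
  · by_cases hk1 : k = i₁
    · subst hk1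
      by_cases hl0 : l = i₀
      · subst hl0; exact dif_symm hp
      · exact (key l hl0 (fun hh => hkl hh.symm)).2
    · by_cases hl0 : l = i₀
      · subst hl0; exact dif_symm (key k hk0 hk1).1
      · by_cases hl1 : l = i₁
        · subst hl1; exact dif_symm (key k hk0 hk1).2
        · obtain ⟨t, ht⟩ := pos k l hkl
          have : p = t := dif_tri (key k hk0 hk1).1 ((key l hl0 hl1).1) ht
          exact this ▸ ht
  
lemma cB (u v : ↥(Cof ξ)) : gB (MM d m ω ξ) d m u v ↔ DifB d u.1 v.1 := by
  haveI : NeZero d := ⟨by omega⟩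
  constructor
  · rintro ⟨hadj, f, hinj, hpadj, hact, ⟨iu, hiu⟩, ⟨iv, hiv⟩⟩
    rcases (cAdj hd hm hω u v).mp hadj with h0 | hb
    swap
    · exact hb
    exfalso
    -- all pairs differ exactly at position 0, so some member has letter 1 at position 0
    have pos : ∀ i j : Fin d, i ≠ j → ∃ p, Dif ((fun i => (f i).1) i) ((fun i => (f i).1) j) p := by
      intro i j hij
      rcases (cAdj hd hm hω (f i) (f j)).mp (hpadj i j hij) with h | ⟨r, _, hdif⟩
      · exact ⟨0, h⟩
      · exact ⟨r+1, hdif⟩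
    have hiuv : iu ≠ iv := by
      intro hc
      apply hadj.1
      rw [← hiu, ← hiv, hc]
    have hp : Dif ((fun i => (f i).1) iu) ((fun i => (f i).1) iv) 0 := by
      simpa [hiu, hiv] using h0
    have hall := dif_all hd (f := fun i => (f i).1) pos hiuv hp
    -- the letter map at position 0 is injective hence surjective
    have ginj : Function.Injective (fun i : Fin d => (f i).1 0) := by
      intro i j hij
      by_contra hc
      exact (hall i j hc).1 hij
    have gbij : Function.Bijective (fun i : Fin d => (f i).1 0) := by
      rw [Fintype.bijective_iff_injective_and_card]
      exact ⟨ginj, by simp [ZMod.card]⟩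
    obtain ⟨k, hk⟩ := gbij.2 (1 : ZMod d)
    obtain ⟨r, hr⟩ := (cAct hd hm hω (f k)).mp (hact k)
    rcases Nat.eq_zero_or_pos r with hr0 | hrpos
    · subst hr0
      exact one_ne_zero' hd (by rw [← hk]; exact hr.2)
    · exact one_ne_E hd (by rw [← hk]; exact hr.1 0 hrpos)
  · rintro ⟨r, hr, hdif⟩
    have hadj : gAdj (MM d m ω ξ) u v := (cAdj hd hm hω u v).mpr (Or.inr ⟨r, hr, hdif⟩)
    refine ⟨hadj, ?_⟩
    -- the explicit clique through u at position r+1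
    set F : Fin d → ↥(Cof ξ) := fun c =>
      ⟨fun n => if n = r + 1 then ((c : ℕ) : ZMod d) else u.1 n,
        mem_cof_mod u _ (r+2) (fun n hn => by simp [show n ≠ r+1 by omega])⟩ with hF
    have hFval : ∀ (c : Fin d) (n : ℕ), n ≠ r + 1 → (F c).1 n = u.1 n := by
      intro c n hn
      simp [hF, hn]
    have hFr : ∀ c : Fin d, (F c).1 (r+1) = ((c : ℕ) : ZMod d) := by
      intro c
      simp [hF]
    have hFact : ∀ c : Fin d, IsAct d (F c).1 r :=
      fun c => ⟨fun i hi => by rw [hFval c i (by omega)]; exact hr.1 i hi,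
        by rw [hFval c r (by omega)]; exact hr.2⟩
    have hFdif : ∀ c c' : Fin d, c ≠ c' → Dif (F c).1 (F c').1 (r+1) := by
      intro c c' hcc
      refine ⟨?_, fun n hn => by rw [hFval c n hn, hFval c' n hn]⟩
      rw [hFr, hFr]
      intro hc
      exact hcc (Fin.ext (cast_inj_lt hd c.2 c'.2 hc))
    refine ⟨F, ?_, ?_, ?_, ?_, ?_⟩
    · intro c c' hcc
      by_contra hne
      exact (hFdif c c' hne).1 (by rw [hcc])
    · intro i j hij
      exact (cAdj hd hm hω _ _).mpr (Or.inr ⟨r, hFact i, hFdif i j hij⟩)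
    · intro i
      exact (cAct hd hm hω _).mpr ⟨r, hFact i⟩
    · refine ⟨⟨(u.1 (r+1)).val, ZMod.val_lt _⟩, ?_⟩
      apply Subtype.ext
      funext n
      by_cases hn : n = r + 1
      · subst hn
        rw [hFr]
        exact ZMod.natCast_rightInverse _
      · exact hFval _ n hn
    · refine ⟨⟨(v.1 (r+1)).val, ZMod.val_lt _⟩, ?_⟩
      apply Subtype.ext
      funext n
      by_cases hn : n = r + 1
      · subst hn
        rw [hFr]
        exact ZMod.natCast_rightInverse _
      · rw [hFval _ n hn]
        exact hdif.2 n hn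

lemma cA (u v : ↥(Cof ξ)) : gA (MM d m ω ξ) d m u v ↔ Dif u.1 v.1 0 := by
  constructor
  · rintro ⟨hadj, hnb⟩
    rcases (cAdj hd hm hω u v).mp hadj with h | h
    · exact h
    · exact absurd ((cB hd hm hω u v).mpr h) hnb
  · intro h
    refine ⟨(cAdj hd hm hω u v).mpr (Or.inl h), fun hc => ?_⟩
    obtain ⟨r, hr, hdif⟩ := (cB hd hm hω u v).mp hc
    exact hdif.1 (h.2 (r+1) (by omega))

lemma cBC {u : ↥(Cof ξ)} {r : ℕ} (hr : IsAct d u.1 r) (v : ↥(Cof ξ)) :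
    v ∈ gBC (MM d m ω ξ) d m u ↔ ∀ n, n ≠ r + 1 → v.1 n = u.1 n := by
  simp only [gBC, Set.mem_insert_iff, Set.mem_setOf_eq]
  constructor
  · rintro (rfl | hb)
    · exact fun n _ => rfl
    · obtain ⟨r', hr', hdif⟩ := (cB hd hm hω u v).mp hb
      have : r' = r := act_unique hd hr' hr
      subst this
      exact fun n hn => (hdif.2 n hn).symm
  · intro h
    by_cases hval : v.1 (r+1) = u.1 (r+1)
    · left
      apply Subtype.ext
      funext n
      by_cases hn : n = r + 1
      · subst hn; exact hval
      · exact h n hn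
    · right
      exact (cB hd hm hω u v).mpr ⟨r, hr, ⟨fun hc => hval hc.symm, fun n hn => (h n hn).symm⟩⟩

end concrete


section paths

variable {d m : ℕ} {ω : ℕ → ((Fin m → ZMod d) →+ ZMod d)} {ξ : Bd d}

/-- concrete adjacency -/
def AdjC (d : ℕ) (x y : Bd d) : Prop := Dif x y 0 ∨ DifB d x y

/-- concrete edges of level `≤ q` (`a`-edges, and `b`-edges at vertices active below `q`). -/
def SCr (d : ℕ) (q : ℕ) (x y : Bd d) : Prop :=
  Dif x y 0 ∨ ∃ j, j + 1 ≤ q ∧ IsAct d x j ∧ Dif x y (j + 1)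

lemma SCr_mono {q q' : ℕ} (h : q ≤ q') {x y : Bd d} (hs : SCr d q x y) : SCr d q' x y := by
  rcases hs with h0 | ⟨j, hj, hact, hdif⟩
  · exact Or.inl h0
  · exact Or.inr ⟨j, by omega, hact, hdif⟩

lemma SCr_adjC {q : ℕ} {x y : Bd d} (hs : SCr d q x y) : AdjC d x y := by
  rcases hs with h0 | ⟨j, hj, hact, hdif⟩
  · exact Or.inl h0
  · exact Or.inr ⟨j, hact, hdif⟩

variable (hd : 3 ≤ d) (hm : 1 ≤ m) (hω : InOmega d m ω)

include hd

lemma path_SC (q : ℕ) : ∀ u v : ↥(Cof ξ), (∀ n, q + 1 ≤ n → u.1 n = v.1 n) →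
    Relation.ReflTransGen (fun x y : ↥(Cof ξ) => SCr d q x.1 y.1) u v := by
  induction q with
  | zero =>
    intro u v h
    by_cases huv : u = v
    · subst huv; exact Relation.ReflTransGen.refl
    · have h0 : u.1 0 ≠ v.1 0 := by
        intro hc
        apply huv
        apply Subtype.ext; funext n
        rcases Nat.eq_zero_or_pos n with rfl | hn
        · exact hc
        · exact h n (by omega)
      exact Relation.ReflTransGen.single (Or.inl ⟨h0, fun n hn => h n (by omega)⟩)
  | succ q ih =>
    intro u v h
    set w1 : ↥(Cof ξ) := ⟨fun n => if n < q then E d else if n = q then 0 else u.1 n,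
      mem_cof_mod u _ (q+1) (fun n hn => by
        simp [show ¬ n < q by omega, show n ≠ q by omega])⟩ with hw1
    set w2 : ↥(Cof ξ) := ⟨fun n => if n < q then E d else if n = q then 0 else v.1 n,
      mem_cof_mod v _ (q+1) (fun n hn => by
        simp [show ¬ n < q by omega, show n ≠ q by omega])⟩ with hw2
    have hu1 : ∀ n, q + 1 ≤ n → u.1 n = w1.1 n := by
      intro n hn
      simp [hw1, show ¬ n < q by omega, show n ≠ q by omega]
    have hv2 : ∀ n, q + 1 ≤ n → w2.1 n = v.1 n := by
      intro n hn
      simp [hw2, show ¬ n < q by omega, show n ≠ q by omega]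
    have p1 : Relation.ReflTransGen (fun x y : ↥(Cof ξ) => SCr d (q+1) x.1 y.1) u w1 :=
      Relation.ReflTransGen.mono (fun x y hs => SCr_mono (by omega) hs) _ _ (ih u w1 hu1)
    have p3 : Relation.ReflTransGen (fun x y : ↥(Cof ξ) => SCr d (q+1) x.1 y.1) w2 v :=
      Relation.ReflTransGen.mono (fun x y hs => SCr_mono (by omega) hs) _ _ (ih w2 v hv2)
    by_cases hmid : u.1 (q+1) = v.1 (q+1)
    · have hw : w1 = w2 := by
        apply Subtype.ext; funext n
        simp only [hw1, hw2]
        by_cases h1 : n < q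
        · simp [h1]
        · by_cases h2 : n = q
          · simp [h2]
          · simp [h1, h2]
            rcases Nat.lt_or_ge n (q+2) with h3 | h3
            · have : n = q + 1 := by omega
              subst this; exact hmid
            · exact h n (by omega)
      exact p1.trans (hw ▸ p3)
    · have hact : IsAct d w1.1 q := by
        constructor
        · intro i hi; simp [hw1, hi]
        · simp [hw1]
      have hdif : Dif w1.1 w2.1 (q+1) := by
        constructor
        · simpa [hw1, hw2] using hmid
        · intro n hn
          simp only [hw1, hw2]
          by_cases h1 : n < q
          · simp [h1]
          · by_cases h2 : n = q
            · simp [h2]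
            · simp [h1, h2]
              exact h n (by omega)
      have step : SCr d (q+1) w1.1 w2.1 := Or.inr ⟨q, le_refl _, hact, hdif⟩
      exact (p1.trans (Relation.ReflTransGen.single step)).trans p3

lemma infinite_V : Infinite ↥(Cof ξ) := by
  apply Infinite.of_injective (fun k : ℕ =>
    (⟨fun n => if n = k then ξ k + 1 else ξ n,
      mem_cof_mod ⟨ξ, self_mem_Cof ξ⟩ _ (k+1) (fun n hn => by
        simp [show n ≠ k by omega])⟩ : ↥(Cof ξ)))
  intro k k' hkk
  by_contra hne
  have h1 := congrFun (congrArg Subtype.val hkk) k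
  simp only [if_pos rfl, if_neg hne] at h1
  exact one_ne_zero' hd (add_eq_left.mp h1)

end paths


section conn

variable {d m : ℕ} {ω : ℕ → ((Fin m → ZMod d) →+ ZMod d)} {ξ : Bd d}
variable (hd : 3 ≤ d) (hm : 1 ≤ m) (hω : InOmega d m ω)

include hd in
lemma adjC_symm {x y : Bd d} (h : AdjC d x y) : AdjC d y x := by
  rcases h with h | h
  · exact Or.inl (dif_symm h)
  · exact Or.inr (difb_act_partner hd h)

include hd hm hω

/-- connectivity of an agreement class (free positions `0..q`, tail that of `t`). -/
lemma class_conn0 (q : ℕ) : ∀ (t u v : ↥(Cof ξ)),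
    (∀ n, q < n → u.1 n = t.1 n) → (∀ n, q < n → v.1 n = t.1 n) →
    Relation.ReflTransGen (fun x y : ↥(Cof ξ) =>
      AdjC d x.1 y.1 ∧ (∀ n, q < n → x.1 n = t.1 n) ∧ (∀ n, q < n → y.1 n = t.1 n)) u v := by
  induction q with
  | zero =>
    intro t u v hu hv
    by_cases huv : u = v
    · subst huv; exact Relation.ReflTransGen.refl
    · have h0 : u.1 0 ≠ v.1 0 := by
        intro hc
        apply huv
        apply Subtype.ext; funext n
        rcases Nat.eq_zero_or_pos n with rfl | hn
        · exact hc
        · rw [hu n (by omega), hv n (by omega)]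
      refine Relation.ReflTransGen.single ⟨Or.inl ⟨h0, fun n hn => ?_⟩, hu, hv⟩
      have : 0 < n := by omega
      rw [hu n this, hv n this]
  | succ q ih =>
    intro t u v hu hv
    have hsymm : Symmetric (fun x y : ↥(Cof ξ) => AdjC d x.1 y.1 ∧
        (∀ n, q + 1 < n → x.1 n = t.1 n) ∧ (∀ n, q + 1 < n → y.1 n = t.1 n)) := by
      rintro x y ⟨hadj, hx, hy⟩
      exact ⟨adjC_symm hd hadj, hy, hx⟩
    have hubmem : ∀ c : ZMod d, (fun n => if n < q then E d else if n = q then 0 else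
        if n = q + 1 then c else t.1 n) ∈ Cof ξ := by
      intro c
      apply mem_cof_mod t _ (q+2)
      intro n hn
      simp [show ¬ n < q by omega, show n ≠ q by omega, show n ≠ q + 1 by omega]
    set hub : ZMod d → ↥(Cof ξ) := fun c => ⟨_, hubmem c⟩ with hhub
    have hubval_high : ∀ (c : ZMod d) (n : ℕ), q + 1 < n → (hub c).1 n = t.1 n := by
      intro c n hn
      simp [hhub, show ¬ n < q by omega, show n ≠ q by omega, show n ≠ q + 1 by omega]
    have hubval_mid : ∀ c : ZMod d, (hub c).1 (q+1) = c := by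
      intro c
      simp [hhub]
    have hubact : ∀ c : ZMod d, IsAct d (hub c).1 q := by
      intro c
      constructor
      · intro i hi; simp [hhub, hi]
      · simp [hhub]
    have block : ∀ w : ↥(Cof ξ), (∀ n, q + 1 < n → w.1 n = t.1 n) →
        Relation.ReflTransGen (fun x y : ↥(Cof ξ) =>
          AdjC d x.1 y.1 ∧ (∀ n, q + 1 < n → x.1 n = t.1 n) ∧
            (∀ n, q + 1 < n → y.1 n = t.1 n)) w (hub (w.1 (q+1))) := by
      intro w hw
      have hpath := ih w w (hub (w.1 (q+1))) (fun n _ => rfl) (by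
        intro n hn
        rcases Nat.lt_or_ge n (q+2) with h2 | h2
        · have : n = q + 1 := by omega
          subst this
          exact hubval_mid _
        · rw [hubval_high _ n (by omega), hw n (by omega)])
      apply Relation.ReflTransGen.mono ?_ _ _ hpath
      rintro x y ⟨hadj, hx, hy⟩
      refine ⟨hadj, ?_, ?_⟩
      · intro n hn
        rw [hx n (by omega)]
        exact hw n hn
      · intro n hn
        rw [hy n (by omega)]
        exact hw n hn
    have pu := block u (fun n hn => hu n (by omega))
    have pv := block v (fun n hn => hv n (by omega))
    by_cases hmid : u.1 (q+1) = v.1 (q+1)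
    · rw [hmid] at pu
      exact pu.trans ((@Relation.ReflTransGen.symmetric _ _ ⟨fun a b h => hsymm h⟩).symm _ _ pv)
    · have hubdif : Dif (hub (u.1 (q+1))).1 (hub (v.1 (q+1))).1 (q+1) := by
        constructor
        · rw [hubval_mid, hubval_mid]; exact hmid
        · intro n hn
          rcases Nat.lt_or_ge n (q+1) with h2 | h2
          · simp only [hhub]
            by_cases h3 : n < q
            · simp [h3]
            · simp [h3, show n = q by omega]
          · rw [hubval_high _ n (by omega), hubval_high _ n (by omega)]
      have hubstep : AdjC d (hub (u.1 (q+1))).1 (hub (v.1 (q+1))).1 :=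
        Or.inr ⟨q, hubact _, hubdif⟩
      refine (pu.trans (Relation.ReflTransGen.single
        ⟨hubstep, fun n hn => hubval_high _ n hn, fun n hn => hubval_high _ n hn⟩)).trans
        ((@Relation.ReflTransGen.symmetric _ _ ⟨fun a b h => hsymm h⟩).symm _ _ pv)

/-- connectivity of an agreement class minus its top active vertex. -/
lemma class_conn (q : ℕ) : ∀ (z u v : ↥(Cof ξ)), (∀ i, i < q → z.1 i = E d) →
    u ≠ z → v ≠ z → (∀ n, q < n → u.1 n = z.1 n) → (∀ n, q < n → v.1 n = z.1 n) →
    Relation.ReflTransGen (fun x y : ↥(Cof ξ) =>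
      AdjC d x.1 y.1 ∧ x ≠ z ∧ y ≠ z ∧ (∀ n, q < n → x.1 n = z.1 n) ∧
      (∀ n, q < n → y.1 n = z.1 n)) u v := by
  induction q with
  | zero =>
    intro z u v hz hu hv hagu hagv
    by_cases huv : u = v
    · subst huv; exact Relation.ReflTransGen.refl
    · have h0 : u.1 0 ≠ v.1 0 := by
        intro hc
        apply huv
        apply Subtype.ext; funext n
        rcases Nat.eq_zero_or_pos n with rfl | hn
        · exact hc
        · rw [hagu n (by omega), hagv n (by omega)]
      refine Relation.ReflTransGen.single ⟨Or.inl ⟨h0, fun n hn => ?_⟩, hu, hv, hagu, hagv⟩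
      have : 0 < n := by omega
      rw [hagu n this, hagv n this]
  | succ q ih =>
    intro z u v hz hu hv hagu hagv
    have hsymm : Symmetric (fun x y : ↥(Cof ξ) => AdjC d x.1 y.1 ∧ x ≠ z ∧ y ≠ z ∧
        (∀ n, q + 1 < n → x.1 n = z.1 n) ∧ (∀ n, q + 1 < n → y.1 n = z.1 n)) := by
      rintro x y ⟨hadj, hx, hy, hax, hay⟩
      exact ⟨adjC_symm hd hadj, hy, hx, hay, hax⟩
    have hubmem : ∀ c : ZMod d, (fun n => if n < q then E d else if n = q then 0 else
        if n = q + 1 then c else z.1 n) ∈ Cof ξ := by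
      intro c
      apply mem_cof_mod z _ (q+2)
      intro n hn
      simp [show ¬ n < q by omega, show n ≠ q by omega, show n ≠ q + 1 by omega]
    set hub : ZMod d → ↥(Cof ξ) := fun c => ⟨_, hubmem c⟩ with hhub
    have hubval_high : ∀ (c : ZMod d) (n : ℕ), q + 1 < n → (hub c).1 n = z.1 n := by
      intro c n hn
      simp [hhub, show ¬ n < q by omega, show n ≠ q by omega, show n ≠ q + 1 by omega]
    have hubval_mid : ∀ c : ZMod d, (hub c).1 (q+1) = c := by
      intro c
      simp [hhub]
    have hubact : ∀ c : ZMod d, IsAct d (hub c).1 q := by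
      intro c
      constructor
      · intro i hi; simp [hhub, hi]
      · simp [hhub]
    have hubne : ∀ c : ZMod d, hub c ≠ z := by
      intro c hc
      have hq : (hub c).1 q = 0 := (hubact c).2
      rw [hc] at hq
      exact zero_ne_E hd (by rw [← hq]; exact hz q (by omega))
    -- path from a member to the hub of its block
    have block : ∀ w : ↥(Cof ξ), w ≠ z → (∀ n, q + 1 < n → w.1 n = z.1 n) →
        Relation.ReflTransGen (fun x y : ↥(Cof ξ) =>
          AdjC d x.1 y.1 ∧ x ≠ z ∧ y ≠ z ∧ (∀ n, q + 1 < n → x.1 n = z.1 n) ∧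
          (∀ n, q + 1 < n → y.1 n = z.1 n)) w (hub (w.1 (q+1))) := by
      intro w hwz hw
      by_cases hblk : w.1 (q+1) = z.1 (q+1)
      · -- w is in the block of z : use the induction hypothesis with removed vertex z
        have hpath := ih z w (hub (w.1 (q+1))) (fun i hi => hz i (by omega)) hwz
          (hubne _)
          (by
            intro n hn
            rcases Nat.lt_or_ge n (q+2) with h2 | h2
            · have : n = q + 1 := by omega
              subst this; exact hblk
            · exact hw n (by omega))
          (by
            intro n hn
            rcases Nat.lt_or_ge n (q+2) with h2 | h2
            · have : n = q + 1 := by omega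
              subst this; rw [hubval_mid]; exact hblk
            · exact hubval_high _ n (by omega))
        apply Relation.ReflTransGen.mono ?_ _ _ hpath
        rintro x y ⟨hadj, hx, hy, hax, hay⟩
        exact ⟨hadj, hx, hy, fun n hn => hax n (by omega), fun n hn => hay n (by omega)⟩
      · -- block without z : full connectivity
        have hpath := class_conn0 hd hm hω q w w (hub (w.1 (q+1))) (fun n _ => rfl)
          (by
            intro n hn
            rcases Nat.lt_or_ge n (q+2) with h2 | h2
            · have : n = q + 1 := by omega
              subst this; exact hubval_mid _
            · rw [hubval_high _ n (by omega), hw n (by omega)])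
        apply Relation.ReflTransGen.mono ?_ _ _ hpath
        rintro x y ⟨hadj, hx, hy⟩
        have hxz : x ≠ z := by
          intro hc
          apply hblk
          rw [← hx (q+1) (by omega), hc]
        have hyz : y ≠ z := by
          intro hc
          apply hblk
          rw [← hy (q+1) (by omega), hc]
        refine ⟨hadj, hxz, hyz, ?_, ?_⟩
        · intro n hn
          rw [hx n (by omega)]
          exact hw n hn
        · intro n hn
          rw [hy n (by omega)]
          exact hw n hn
    have pu := block u hu (fun n hn => hagu n (by omega))
    have pv := block v hv (fun n hn => hagv n (by omega))
    by_cases hmid : u.1 (q+1) = v.1 (q+1)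
    · rw [hmid] at pu
      exact pu.trans ((@Relation.ReflTransGen.symmetric _ _ ⟨fun a b h => hsymm h⟩).symm _ _ pv)
    · have hubdif : Dif (hub (u.1 (q+1))).1 (hub (v.1 (q+1))).1 (q+1) := by
        constructor
        · rw [hubval_mid, hubval_mid]; exact hmid
        · intro n hn
          rcases Nat.lt_or_ge n (q+1) with h2 | h2
          · simp only [hhub]
            by_cases h3 : n < q
            · simp [h3]
            · simp [h3, show n = q by omega]
          · rw [hubval_high _ n (by omega), hubval_high _ n (by omega)]
      have hubstep : AdjC d (hub (u.1 (q+1))).1 (hub (v.1 (q+1))).1 :=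
        Or.inr ⟨q, hubact _, hubdif⟩
      exact (pu.trans (Relation.ReflTransGen.single
        ⟨hubstep, hubne _, hubne _, fun n hn => hubval_high _ n hn,
          fun n hn => hubval_high _ n hn⟩)).trans
        ((@Relation.ReflTransGen.symmetric _ _ ⟨fun a b h => hsymm h⟩).symm _ _ pv)

/-- there is no finite nonempty set closed under all adjacencies. -/
lemma no_finite_closed (C : Set ↥(Cof ξ)) (hfin : C.Finite) (hne : C.Nonempty)
    (hclo : ∀ x ∈ C, ∀ y : ↥(Cof ξ), gAdj (MM d m ω ξ) x y → y ∈ C) : False := by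
  obtain ⟨x₀, hx₀⟩ := hne
  have hall : ∀ v : ↥(Cof ξ), v ∈ C := by
    intro v
    obtain ⟨N₁, h₁⟩ := x₀.2
    obtain ⟨N₂, h₂⟩ := v.2
    have hagree : ∀ n, max N₁ N₂ + 1 ≤ n → x₀.1 n = v.1 n := fun n hn => by
      rw [← h₁ n (by omega), h₂ n (by omega)]
    have hpath := path_SC hd (max N₁ N₂) x₀ v hagree
    clear hagree h₁ h₂
    induction hpath with
    | refl => exact hx₀
    | tail hab hstep ih =>
      refine hclo _ ih _ ((cAdj hd hm hω _ _).mpr ?_)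
      exact SCr_adjC hstep
  haveI := infinite_V hd (ξ := ξ)
  have : C = Set.univ := Set.eq_univ_of_forall hall
  rw [this] at hfin
  exact Set.infinite_univ hfin

end conn


section sep

variable {d m : ℕ} {ω : ℕ → ((Fin m → ZMod d) →+ ZMod d)} {ξ : Bd d}
variable (hd : 3 ≤ d) (hm : 1 ≤ m) (hω : InOmega d m ω)

include hd

lemma class_card (q : ℕ) (t : ↥(Cof ξ)) :
    {w : ↥(Cof ξ) | ∀ n, q < n → w.1 n = t.1 n}.ncard = d ^ (q+1) ∧
    {w : ↥(Cof ξ) | ∀ n, q < n → w.1 n = t.1 n}.Finite := by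
  haveI : NeZero d := ⟨by omega⟩
  have e : ↥{w : ↥(Cof ξ) | ∀ n, q < n → w.1 n = t.1 n} ≃ (Fin (q+1) → ZMod d) :=
    { toFun := fun w => fun i => w.1.1 i
      invFun := fun g => ⟨⟨fun n => if h : n < q + 1 then g ⟨n, h⟩ else t.1 n,
          mem_cof_mod t _ (q+1) (fun n hn => by
            rw [dif_neg (by omega)])⟩,
        fun n hn => by simp only; rw [dif_neg (by omega)]⟩
      left_inv := fun w => by
        apply Subtype.ext; apply Subtype.ext; funext n
        by_cases h : n < q + 1
        · simp only; rw [dif_pos h]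
        · simp only; rw [dif_neg h]
          exact (w.2 n (by omega)).symm
      right_inv := fun g => by
        funext i
        simp only
        rw [dif_pos i.2] }
  constructor
  · rw [← Nat.card_coe_set_eq, Nat.card_congr e, Nat.card_pi]
    simp [Nat.card_zmod]
  · haveI : Finite ↥{w : ↥(Cof ξ) | ∀ n, q < n → w.1 n = t.1 n} := Finite.of_equiv _ e.symm
    exact Set.toFinite _

include hm hω

lemma nbB {u : ↥(Cof ξ)} {r : ℕ} (hr : IsAct d u.1 r) {y : ↥(Cof ξ)}
    (hy : y ∈ gBC (MM d m ω ξ) d m u) {x : ↥(Cof ξ)} (hx : x ∉ gBC (MM d m ω ξ) d m u)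
    (hadj : gAdj (MM d m ω ξ) x y) : ∀ n, r < n → x.1 n = y.1 n := by
  have hyu : ∀ n, n ≠ r + 1 → y.1 n = u.1 n := (cBC hd hm hω hr y).mp hy
  rcases (cAdj hd hm hω x y).mp hadj with h0 | ⟨rx, hactx, hdif⟩
  · exact fun n hn => h0.2 n (by omega)
  · rcases Nat.lt_trichotomy (rx+1) (r+1) with hlt | heq | hgt
    · exact fun n hn => hdif.2 n (by omega)
    · exfalso
      apply hx
      rw [cBC hd hm hω hr]
      intro n hn
      rw [hdif.2 n (by omega), hyu n hn]
    · exfalso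
      have h1 : x.1 r = E d := hactx.1 r (by omega)
      have h2 : x.1 r = y.1 r := hdif.2 r (by omega)
      have h3 : y.1 r = u.1 r := hyu r (by omega)
      exact zero_ne_E hd (by rw [← hr.2, ← h3, ← h2]; exact h1)

lemma BC_class {u : ↥(Cof ξ)} {r : ℕ} (hr : IsAct d u.1 r) {y : ↥(Cof ξ)}
    (hy : y ∈ gBC (MM d m ω ξ) d m u) (w : ↥(Cof ξ))
    (hw : w ∈ gBC (MM d m ω ξ) d m u) (hagr : ∀ n, r < n → w.1 n = y.1 n) : w = y := by
  have hyu := (cBC hd hm hω hr y).mp hy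
  have hwu := (cBC hd hm hω hr w).mp hw
  apply Subtype.ext; funext n
  by_cases hn : n = r + 1
  · subst hn; exact hagr (r+1) (by omega)
  · rw [hwu n hn, hyu n hn]

lemma cLower {u : ↥(Cof ξ)} {r : ℕ} (hr : IsAct d u.1 r) (C : Set ↥(Cof ξ))
    (hC : gCl (MM d m ω ξ) d m u C) : d ^ (r+1) - 1 ≤ C.ncard := by
  obtain ⟨hfin, hne, hdisj, hclo⟩ := hC
  by_cases hcl : ∀ x ∈ C, ∀ y : ↥(Cof ξ), gAdj (MM d m ω ξ) x y → y ∈ C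
  · exact (no_finite_closed hd hm hω C hfin hne hcl).elim
  push_neg at hcl
  obtain ⟨x, hxC, y, hadj, hyC⟩ := hcl
  have hyBC : y ∈ gBC (MM d m ω ξ) d m u := (hclo x hxC y hadj).resolve_left hyC
  have hxBC := hdisj x hxC
  have hxy := nbB hd hm hω hr hyBC hxBC hadj
  have hxney : x ≠ y := fun hc => hxBC (hc ▸ hyBC)
  have hyu := (cBC hd hm hω hr y).mp hyBC
  have hypat : ∀ i, i < r → y.1 i = E d := fun i hi => by
    rw [hyu i (by omega)]; exact hr.1 i hi
  have hsub : {w : ↥(Cof ξ) | ∀ n, r < n → w.1 n = y.1 n} \ {y} ⊆ C := by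
    rintro w ⟨hwB, hwy⟩
    have hwy' : w ≠ y := hwy
    have hpath := class_conn hd hm hω r y x w hypat hxney hwy' hxy hwB
    clear hwB hwy hwy'
    induction hpath with
    | refl => exact hxC
    | tail hab hstep ih =>
      rcases hclo _ ih _ ((cAdj hd hm hω _ _).mpr hstep.1) with h | h
      · exact h
      · exact (hstep.2.2.1 (BC_class hd hm hω hr hyBC _ h hstep.2.2.2.2)).elim
  have hymem : y ∈ {w : ↥(Cof ξ) | ∀ n, r < n → w.1 n = y.1 n} := fun n hn => rfl
  have hcard := Set.ncard_diff_singleton_of_mem hymem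
  have := Set.ncard_le_ncard hsub hfin
  rw [hcard, (class_card hd r y).1] at this
  exact this

lemma cBranch {u : ↥(Cof ξ)} {r : ℕ} (hr : IsAct d u.1 r) :
    ∃ C, gCl (MM d m ω ξ) d m u C ∧ C.ncard = d ^ (r+1) - 1 := by
  haveI : NeZero d := ⟨by omega⟩
  set y : ↥(Cof ξ) := ⟨fun n => if n < r then E d else if n = r then 0 else
      if n = r + 1 then 1 else u.1 n,
    mem_cof_mod u _ (r+2) (fun n hn => by
      simp [show ¬ n < r by omega, show n ≠ r by omega, show n ≠ r + 1 by omega])⟩ with hy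
  have hymid : y.1 (r+1) = 1 := by
    simp [hy]
  have hypat : ∀ i, i < r → y.1 i = E d := fun i hi => by simp [hy, hi]
  have hyact : IsAct d y.1 r := ⟨hypat, by simp [hy]⟩
  have hyval : ∀ n, n ≠ r + 1 → y.1 n = u.1 n := by
    intro n hn
    rcases Nat.lt_trichotomy n r with h1 | h1 | h1
    · rw [hypat n h1, hr.1 n h1]
    · subst h1; rw [hyact.2, hr.2]
    · simp [hy, show ¬ n < r by omega, show n ≠ r by omega, hn]
  have hyBC : y ∈ gBC (MM d m ω ξ) d m u := (cBC hd hm hω hr y).mpr hyval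
  set C : Set ↥(Cof ξ) := {w : ↥(Cof ξ) | ∀ n, r < n → w.1 n = y.1 n} \ {y} with hC
  have hfin : C.Finite := ((class_card hd r y).2).diff
  refine ⟨C, ⟨hfin, ?_, ?_, ?_⟩, ?_⟩
  · set w1 : ↥(Cof ξ) := ⟨fun n => if n ≤ r then 1 else y.1 n,
      mem_cof_mod y _ (r+1) (fun n hn => by simp [show ¬ n ≤ r by omega])⟩ with hw1
    refine ⟨w1, ?_, ?_⟩
    · intro n hn; simp [hw1, show ¬ n ≤ r by omega]
    · intro hc
      have hc' : w1 = y := hc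
      have h1 : (1 : ZMod d) = 0 := by
        rw [← hyact.2, ← hc']
        simp [hw1]
      exact one_ne_zero' hd h1
  · rintro w ⟨hwcl, hwy⟩ hwBC
    exact hwy (BC_class hd hm hω hr hyBC w hwBC hwcl)
  · rintro w ⟨hwcl, hwy⟩ v hadj
    have hwy' : w ≠ y := hwy
    rcases (cAdj hd hm hω w v).mp hadj with h0 | ⟨rw', hactw, hdif⟩
    · have hvcl : ∀ n, r < n → v.1 n = y.1 n := fun n hn => by
        rw [← h0.2 n (by omega)]; exact hwcl n hn
      by_cases hvy : v = y
      · exact Or.inr (hvy ▸ hyBC)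
      · exact Or.inl ⟨hvcl, hvy⟩
    · rcases Nat.lt_trichotomy (rw' + 1) (r + 1) with hlt | heq | hgt
      · have hvcl : ∀ n, r < n → v.1 n = y.1 n := fun n hn => by
          rw [← hdif.2 n (by omega)]; exact hwcl n hn
        by_cases hvy : v = y
        · exact Or.inr (hvy ▸ hyBC)
        · exact Or.inl ⟨hvcl, hvy⟩
      · exfalso
        apply hwy'
        have hrw : rw' = r := by omega
        subst hrw
        apply Subtype.ext; funext n
        rcases Nat.lt_trichotomy n rw' with h1 | h1 | h1
        · rw [hactw.1 n h1, hypat n h1]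
        · subst h1; rw [hactw.2]; exact hyact.2.symm
        · exact hwcl n h1
      · exfalso
        have hw1 : w.1 (r+1) = y.1 (r+1) := hwcl (r+1) (by omega)
        rw [hymid] at hw1
        rcases Nat.lt_or_ge (r+1) rw' with h2 | h2
        · exact one_ne_E hd (by rw [← hw1]; exact hactw.1 (r+1) h2)
        · have : rw' = r + 1 := by omega
          subst this
          exact one_ne_zero' hd (by rw [← hw1]; exact hactw.2)
  · have hymem : y ∈ {w : ↥(Cof ξ) | ∀ n, r < n → w.1 n = y.1 n} := fun n hn => rfl
    rw [hC, Set.ncard_diff_singleton_of_mem hymem,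
      (class_card hd r y).1]

lemma cSep (j : ℕ) (u : ↥(Cof ξ)) :
    gSep (MM d m ω ξ) d m j u ↔ IsAct d u.1 j := by
  constructor
  · rintro ⟨hact, ⟨C, hC, hle⟩, hall⟩
    obtain ⟨r, hr⟩ := (cAct hd hm hω u).mp hact
    have h1 : d ^ (r+1) - 1 ≤ C.ncard := cLower hd hm hω hr C hC
    obtain ⟨C₁, hC₁, hcard₁⟩ := cBranch hd hm hω hr
    have h2 := hall C₁ hC₁
    rw [hcard₁] at h2
    have e1 : 1 ≤ d ^ (r+1) := Nat.one_le_pow _ _ (by omega)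
    have e2 : 1 ≤ d ^ (j+1) := Nat.one_le_pow _ _ (by omega)
    have hle1 : d ^ (r+1) ≤ d ^ (j+1) := by omega
    have hle2 : d ^ (j+1) ≤ d ^ (r+1) := by omega
    have : r + 1 ≤ j + 1 := (Nat.pow_le_pow_iff_right (by omega)).mp hle1
    have : j + 1 ≤ r + 1 := (Nat.pow_le_pow_iff_right (by omega)).mp hle2
    have : r = j := by omega
    exact this ▸ hr
  · intro hj
    obtain ⟨C₁, hC₁, hcard₁⟩ := cBranch hd hm hω hj
    refine ⟨(cAct hd hm hω u).mpr ⟨j, hj⟩, ⟨C₁, hC₁, by omega⟩, ?_⟩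
    intro C hC
    exact cLower hd hm hω hj C hC

end sep


section agr

variable {d m : ℕ} {ω : ℕ → ((Fin m → ZMod d) →+ ZMod d)} {ξ : Bd d}
variable (hd : 3 ≤ d) (hm : 1 ≤ m) (hω : InOmega d m ω)

include hd hm hω

lemma cS (q : ℕ) (x y : ↥(Cof ξ)) :
    gS (MM d m ω ξ) d m q x y ↔ SCr d q x.1 y.1 := by
  constructor
  · rintro (⟨hadj, hnb⟩ | ⟨hb, j, hj, hsep⟩)
    · exact Or.inl ((cA hd hm hω x y).mp ⟨hadj, hnb⟩)
    · obtain ⟨r, hr, hdif⟩ := (cB hd hm hω x y).mp hb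
      have hact_j : IsAct d x.1 j := (cSep hd hm hω j x).mp hsep
      have : r = j := act_unique hd hr hact_j
      subst this
      exact Or.inr ⟨r, hj, hr, hdif⟩
  · rintro (h0 | ⟨j, hj, hact, hdif⟩)
    · exact Or.inl ((cA hd hm hω x y).mpr h0)
    · exact Or.inr ⟨(cB hd hm hω x y).mpr ⟨j, hact, hdif⟩, j, hj,
        (cSep hd hm hω j x).mpr hact⟩

lemma cAgr (q : ℕ) (u v : ↥(Cof ξ)) :
    gAgr (MM d m ω ξ) d m q u v ↔ ∀ n, q ≤ n → u.1 n = v.1 n := by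
  cases q with
  | zero =>
    constructor
    · rintro rfl
      exact fun n _ => rfl
    · intro h
      exact Subtype.ext (funext fun n => h n (by omega))
  | succ q =>
    constructor
    · intro h
      induction h with
      | refl => exact fun n _ => rfl
      | tail hab hstep ih =>
        intro n hn
        rw [ih n hn]
        rcases (cS hd hm hω q _ _).mp hstep with h0 | ⟨j, hj, hact, hdif⟩
        · exact h0.2 n (by omega)
        · exact hdif.2 n (by omega)
    · intro h
      exact Relation.ReflTransGen.mono (fun x y hs => (cS hd hm hω q x y).mpr hs) _ _
        (path_SC hd q u v h)

lemma cPhi (u₀ : ↥(Cof ξ)) (p r : ℕ) :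
    gPhi (MM d m ω ξ) d m u₀ p r ↔
      (r ≤ p ∧ u₀.1 p = 0 ∧ ∀ i, p - r ≤ i → i < p → u₀.1 i = E d) := by
  constructor
  · rintro ⟨hrp, u, hagr, hsep⟩
    have hact : IsAct d u.1 p := (cSep hd hm hω p u).mp hsep
    have hagr' := (cAgr hd hm hω (p - r) u₀ u).mp hagr
    refine ⟨hrp, ?_, ?_⟩
    · rw [hagr' p (by omega)]
      exact hact.2
    · intro i h1 h2
      rw [hagr' i (by omega)]
      exact hact.1 i h2
  · rintro ⟨hrp, hp0, hrun⟩
    refine ⟨hrp, ⟨fun n => if n < p then E d else u₀.1 n,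
      mem_cof_mod u₀ _ p (fun n hn => by simp [show ¬ n < p by omega])⟩, ?_, ?_⟩
    · rw [cAgr hd hm hω]
      intro n hn
      by_cases h1 : n < p
      · simp only [if_pos h1]
        exact hrun n (by omega) h1
      · simp [h1]
    · rw [cSep hd hm hω]
      constructor
      · intro i hi
        simp [hi]
      · simp only
        rw [if_neg (lt_irrefl p)]
        exact hp0

end agr

end SpinalProof

/-- if there is an isomorphism of rooted, undirected, unlabeled graphs
`(Γ_ξ, ξ) → (Γ_η, η)`, then `ξ ∼ η`. -/
theorem compatible_of_rooted_iso (d m : ℕ) (hd : 3 ≤ d) (hm : 1 ≤ m)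
    (ω : ℕ → ((Fin m → ZMod d) →+ ZMod d)) (hω : InOmega d m ω) (ξ η : Bd d)
    (φ : ↥(Cof ξ) ≃ ↥(Cof η)) (hiso : IsRootedIso d m ω ξ η φ) :
    Compatible d ξ η := by
  classical
  obtain ⟨hroot, hmult⟩ := hiso
  have hM : ∀ u v : ↥(Cof ξ), SpinalProof.MM d m ω η (φ u) (φ v) = SpinalProof.MM d m ω ξ u v :=
    fun u v => (hmult u v).symm
  have tphi : ∀ p r : ℕ,
      SpinalProof.gPhi (SpinalProof.MM d m ω ξ) d m ⟨ξ, self_mem_Cof ξ⟩ p r ↔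
      SpinalProof.gPhi (SpinalProof.MM d m ω η) d m ⟨η, self_mem_Cof η⟩ p r := by
    intro p r
    have h := SpinalProof.tPhi (d := d) (m := m) φ hM ⟨ξ, self_mem_Cof ξ⟩ p r
    rw [hroot] at h
    exact h.symm
  have charξ := fun p r => SpinalProof.cPhi hd hm hω (ξ := ξ) ⟨ξ, self_mem_Cof ξ⟩ p r
  have charη := fun p r => SpinalProof.cPhi hd hm hω (ξ := η) ⟨η, self_mem_Cof η⟩ p r
  have key : ∀ p r : ℕ,
      (r ≤ p ∧ ξ p = 0 ∧ ∀ i, p - r ≤ i → i < p → ξ i = (d : ZMod d) - 1) ↔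
      (r ≤ p ∧ η p = 0 ∧ ∀ i, p - r ≤ i → i < p → η i = (d : ZMod d) - 1) := by
    intro p r
    exact (charξ p r).symm.trans ((tphi p r).trans (charη p r))
  have hzero : ∀ n, ξ n = 0 ↔ η n = 0 := by
    intro n
    constructor
    · intro h
      exact ((key n 0).mp ⟨by omega, h,
        fun i hi hlt => ((lt_irrefl n) (lt_of_le_of_lt (by omega : n ≤ i) hlt)).elim⟩).2.1
    · intro h
      exact ((key n 0).mpr ⟨by omega, h,
        fun i hi hlt => ((lt_irrefl n) (lt_of_le_of_lt (by omega : n ≤ i) hlt)).elim⟩).2.1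
  refine ⟨hzero, ?_⟩
  intro p hp r
  constructor
  · rintro ⟨hrp, hrun⟩
    have h := (key p r).mp ⟨hrp, hp, fun i h1 h2 => hrun i h1 h2⟩
    exact ⟨h.1, h.2.2⟩
  · rintro ⟨hrp, hrun⟩
    have h := (key p r).mpr ⟨hrp, (hzero p).mp hp, fun i h1 h2 => hrun i h1 h2⟩
    exact ⟨h.1, h.2.2⟩

end
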